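/- Let f : [0,1]^2 → ℝ satisfy the mixed Hölder condition |f(x',y') - f(x,y') - f(x',y) + f(x,y)| ≤ C|x'-x|^α |y'-y|^α for 0 < α < 1/2. Let Q^j denote the dyadic difference operator P^{j+1} - P^j acting in the first variable and Q'^{j'} the analogous operator in the second variable. Then ‖Q^j Q'^{j'} f‖_{L^∞([0,1]^2)} ≤ C' 2^{-jα} 2^{-j'α} for a constant C' depending only on C. -/

import Mathlib

open MeasureTheory

/-- Dyadic averaging at scale `j` in the first variable of `f : ℝ → ℝ → ℝ`. -/
noncomputable def avg1 (j : ℕ) (f : ℝ → ℝ → ℝ) (x y : ℝ) : ℝ :=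
  (2:ℝ)^j * ∫ s in Set.Ioc (((⌈(2:ℝ)^j * x⌉ : ℝ) - 1) / (2:ℝ)^j)
      ((⌈(2:ℝ)^j * x⌉ : ℝ) / (2:ℝ)^j), f s y

/-- Dyadic averaging at scale `j'` in the second variable. -/
noncomputable def avg2 (j' : ℕ) (f : ℝ → ℝ → ℝ) (x y : ℝ) : ℝ :=
  (2:ℝ)^j' * ∫ s in Set.Ioc (((⌈(2:ℝ)^j' * y⌉ : ℝ) - 1) / (2:ℝ)^j')
      ((⌈(2:ℝ)^j' * y⌉ : ℝ) / (2:ℝ)^j'), f x s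

/-- `Q^j = P^{j+1} - P^j` in the first variable. -/
noncomputable def diff1 (j : ℕ) (f : ℝ → ℝ → ℝ) (x y : ℝ) : ℝ :=
  avg1 (j+1) f x y - avg1 j f x y

/-- `Q'^{j'} = P'^{j'+1} - P'^{j'}` in the second variable. -/
noncomputable def diff2 (j' : ℕ) (f : ℝ → ℝ → ℝ) (x y : ℝ) : ℝ :=
  avg2 (j'+1) f x y - avg2 j' f x y

/-! ### Auxiliary lemmas about the dyadic intervals -/

private lemma dyadic_self_mem (k : ℕ) (z : ℝ) :
    z ∈ Set.Ioc (((⌈(2:ℝ)^k * z⌉ : ℝ) - 1) / (2:ℝ)^k) ((⌈(2:ℝ)^k * z⌉ : ℝ) / (2:ℝ)^k) := by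
  have hp : (0:ℝ) < (2:ℝ)^k := by positivity
  constructor
  · rw [div_lt_iff₀ hp]
    have h1 := Int.ceil_lt_add_one ((2:ℝ)^k * z)
    have h2 : z * (2:ℝ)^k = (2:ℝ)^k * z := mul_comm _ _
    linarith
  · rw [le_div_iff₀ hp]
    have h1 := Int.le_ceil ((2:ℝ)^k * z)
    have h2 : z * (2:ℝ)^k = (2:ℝ)^k * z := mul_comm _ _
    linarith

private lemma dyadic_subset (k : ℕ) {z : ℝ} (hz : z ∈ Set.Ioc (0:ℝ) 1) :
    Set.Ioc (((⌈(2:ℝ)^k * z⌉ : ℝ) - 1) / (2:ℝ)^k) ((⌈(2:ℝ)^k * z⌉ : ℝ) / (2:ℝ)^k)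
      ⊆ Set.Icc (0:ℝ) 1 := by
  have hp : (0:ℝ) < (2:ℝ)^k := by positivity
  have h1 : (1:ℤ) ≤ ⌈(2:ℝ)^k * z⌉ := Int.ceil_pos.mpr (mul_pos hp hz.1)
  have h1' : (1:ℝ) ≤ (⌈(2:ℝ)^k * z⌉ : ℝ) := by exact_mod_cast h1
  have h2 : ⌈(2:ℝ)^k * z⌉ ≤ ((2:ℤ)^k) := by
    apply Int.ceil_le.mpr
    push_cast
    nlinarith [hz.2]
  have h2' : (⌈(2:ℝ)^k * z⌉ : ℝ) ≤ (2:ℝ)^k := by exact_mod_cast h2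
  intro s hs
  constructor
  · have : (0:ℝ) ≤ ((⌈(2:ℝ)^k * z⌉ : ℝ) - 1) / (2:ℝ)^k := by
      apply div_nonneg (by linarith) hp.le
    linarith [hs.1]
  · have : (⌈(2:ℝ)^k * z⌉ : ℝ) / (2:ℝ)^k ≤ 1 := by
      rw [div_le_one hp]; exact h2'
    linarith [hs.2]

private lemma dyadic_len (k : ℕ) (z : ℝ) :
    (⌈(2:ℝ)^k * z⌉ : ℝ) / (2:ℝ)^k - ((⌈(2:ℝ)^k * z⌉ : ℝ) - 1) / (2:ℝ)^k = ((2:ℝ)^k)⁻¹ := by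
  have hp : (0:ℝ) < (2:ℝ)^k := by positivity
  field_simp
  ring

private lemma dyadic_dist (k : ℕ) (z : ℝ) {s : ℝ}
    (hs : s ∈ Set.Ioc (((⌈(2:ℝ)^k * z⌉ : ℝ) - 1) / (2:ℝ)^k) ((⌈(2:ℝ)^k * z⌉ : ℝ) / (2:ℝ)^k)) :
    |s - z| ≤ ((2:ℝ)^k)⁻¹ := by
  have hz := dyadic_self_mem k z
  have hlen := dyadic_len k z
  rw [abs_sub_le_iff]
  exact ⟨by linarith [hs.2, hz.1], by linarith [hs.1, hz.2]⟩

/-! ### Auxiliary lemmas about averages -/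

private lemma abs_avg_le {k : ℕ} {a b M : ℝ} (hab : b - a = ((2:ℝ)^k)⁻¹)
    (g : ℝ → ℝ) (hg : ∀ s ∈ Set.Ioc a b, |g s| ≤ M) :
    |(2:ℝ)^k * ∫ s in Set.Ioc a b, g s| ≤ M := by
  have hp : (0:ℝ) < (2:ℝ)^k := by positivity
  have hvol : volume (Set.Ioc a b) < ⊤ := by
    rw [Real.volume_Ioc]; exact ENNReal.ofReal_lt_top
  have h1 : ‖∫ s in Set.Ioc a b, g s‖ ≤ M * (volume (Set.Ioc a b)).toReal :=
    norm_setIntegral_le_of_norm_le_const hvol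
      (fun s hs => by simpa using hg s hs)
  rw [Real.volume_Ioc, ENNReal.toReal_ofReal (by rw [hab]; positivity), hab,
    Real.norm_eq_abs] at h1
  rw [abs_mul, abs_of_pos hp]
  calc (2:ℝ)^k * |∫ s in Set.Ioc a b, g s| ≤ (2:ℝ)^k * (M * ((2:ℝ)^k)⁻¹) :=
        mul_le_mul_of_nonneg_left h1 hp.le
  _ = M := by field_simp

private lemma avg_mul_add {k : ℕ} {a b : ℝ} (hab : b - a = ((2:ℝ)^k)⁻¹)
    {g : ℝ → ℝ} (hg : IntegrableOn g (Set.Ioc a b)) (D : ℝ) :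
    (2:ℝ)^k * ∫ s in Set.Ioc a b, (g s + D) =
      ((2:ℝ)^k * ∫ s in Set.Ioc a b, g s) + D := by
  have hp : (0:ℝ) < (2:ℝ)^k := by positivity
  have hinv : (0:ℝ) < ((2:ℝ)^k)⁻¹ := by positivity
  have hle : a ≤ b := by linarith
  have hvol : volume (Set.Ioc a b) < ⊤ := by
    rw [Real.volume_Ioc]; exact ENNReal.ofReal_lt_top
  rw [integral_add hg (integrableOn_const hvol.ne), setIntegral_const, Measure.real,
    Real.volume_Ioc, ENNReal.toReal_ofReal (by linarith), hab, smul_eq_mul]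
  field_simp

private lemma avg_mul_split {k : ℕ} {a b : ℝ}
    {g₁ g₂ : ℝ → ℝ} (h₁ : IntegrableOn g₁ (Set.Ioc a b)) (h₂ : IntegrableOn g₂ (Set.Ioc a b)) :
    (2:ℝ)^k * ∫ s in Set.Ioc a b, (g₁ s + g₂ s) =
      ((2:ℝ)^k * ∫ s in Set.Ioc a b, g₁ s) + (2:ℝ)^k * ∫ s in Set.Ioc a b, g₂ s := by
  rw [integral_add h₁ h₂, mul_add]

/-- Mixed Hölder functions have mixed martingale differences bounded by
`C' 2^{-jα} 2^{-j'α}`. -/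
theorem mixed_diff_bound_of_mixed_holder (f : ℝ → ℝ → ℝ) (C α : ℝ)
    (hα : 0 < α) (hα' : α < 1/2) (hC : 0 < C)
    (hf : ∀ x ∈ Set.Icc (0:ℝ) 1, ∀ x' ∈ Set.Icc (0:ℝ) 1,
      ∀ y ∈ Set.Icc (0:ℝ) 1, ∀ y' ∈ Set.Icc (0:ℝ) 1,
      |f x' y' - f x y' - f x' y + f x y| ≤ C * |x' - x| ^ α * |y' - y| ^ α)
    (hcont : Continuous fun p : ℝ × ℝ => f p.1 p.2) :
    ∃ C' > 0, ∀ j j' : ℕ, ∀ x ∈ Set.Ioc (0:ℝ) 1, ∀ y ∈ Set.Ioc (0:ℝ) 1,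
      |diff1 j (fun a b => diff2 j' f a b) x y|
        ≤ C' * (2:ℝ) ^ (-(j:ℝ) * α) * (2:ℝ) ^ (-(j':ℝ) * α) := by
  refine ⟨4*C, by linarith, ?_⟩
  intro j j' x hx y hy
  have hx' : x ∈ Set.Icc (0:ℝ) 1 := ⟨hx.1.le, hx.2⟩
  have hy' : y ∈ Set.Icc (0:ℝ) 1 := ⟨hy.1.le, hy.2⟩
  set h : ℝ → ℝ → ℝ := fun s t => f s t - f x t - f s y + f x y with hh
  have hcont_h : Continuous fun p : ℝ × ℝ => h p.1 p.2 := by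
    apply Continuous.add
    · apply Continuous.sub
      · apply Continuous.sub hcont
        exact hcont.comp (continuous_const.prodMk continuous_snd)
      · exact hcont.comp (continuous_fst.prodMk continuous_const)
    · exact continuous_const
  have hcont_h1 : ∀ a : ℝ, Continuous fun t => h a t :=
    fun a => hcont_h.comp (continuous_const.prodMk continuous_id)
  have hcont_fx : Continuous fun t => f x t :=
    hcont.comp (continuous_const.prodMk continuous_id)
  -- Step A : bound on `avg2` of `h`
  have stepA : ∀ m : ℕ, ∀ a ∈ Set.Icc (0:ℝ) 1,
      |avg2 m h a y| ≤ C * |a - x| ^ α * (((2:ℝ)^m)⁻¹) ^ α := by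
    intro m a ha
    unfold avg2
    apply abs_avg_le (dyadic_len m y)
    intro t ht
    have ht1 : t ∈ Set.Icc (0:ℝ) 1 := dyadic_subset m hy ht
    have ht2 : |t - y| ≤ ((2:ℝ)^m)⁻¹ := dyadic_dist m y ht
    have hb := hf x hx' a ha y hy' t ht1
    calc |h a t| = |f a t - f x t - f a y + f x y| := rfl
    _ ≤ C * |a - x| ^ α * |t - y| ^ α := hb
    _ ≤ C * |a - x| ^ α * (((2:ℝ)^m)⁻¹) ^ α := by
        apply mul_le_mul_of_nonneg_left
          (Real.rpow_le_rpow (abs_nonneg _) ht2 hα.le) (by positivity)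
  -- Step B : bound on `diff2` of `h`
  have stepB : ∀ a ∈ Set.Icc (0:ℝ) 1,
      |diff2 j' h a y| ≤ 2 * C * |a - x| ^ α * (((2:ℝ)^j')⁻¹) ^ α := by
    intro a ha
    have h1 := stepA (j'+1) a ha
    have h2 := stepA j' a ha
    have hmono : (((2:ℝ)^(j'+1))⁻¹) ^ α ≤ (((2:ℝ)^j')⁻¹) ^ α := by
      apply Real.rpow_le_rpow (by positivity) _ hα.le
      apply inv_anti₀ (by positivity)
      apply pow_le_pow_right₀ (by norm_num) (Nat.le_succ _)
    have h1' : |avg2 (j'+1) h a y| ≤ C * |a - x| ^ α * (((2:ℝ)^j')⁻¹) ^ α :=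
      h1.trans (mul_le_mul_of_nonneg_left hmono (by positivity))
    calc |diff2 j' h a y| ≤ |avg2 (j'+1) h a y| + |avg2 j' h a y| := abs_sub _ _
    _ ≤ 2 * C * |a - x| ^ α * (((2:ℝ)^j')⁻¹) ^ α := by linarith
  -- Step C : `diff2 j' f a y = diff2 j' h a y + diff2 j' f x y`
  have stepC : ∀ a : ℝ, diff2 j' f a y = diff2 j' h a y + diff2 j' f x y := by
    intro a
    have key : ∀ m : ℕ, avg2 m f a y = avg2 m h a y + avg2 m f x y + (f a y - f x y) := by
      intro m
      have hint1 : IntegrableOn (fun t => h a t)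
          (Set.Ioc (((⌈(2:ℝ)^m * y⌉ : ℝ) - 1) / (2:ℝ)^m) ((⌈(2:ℝ)^m * y⌉ : ℝ) / (2:ℝ)^m)) :=
        (hcont_h1 a).integrableOn_Ioc
      have hint2 : IntegrableOn (fun t => f x t)
          (Set.Ioc (((⌈(2:ℝ)^m * y⌉ : ℝ) - 1) / (2:ℝ)^m) ((⌈(2:ℝ)^m * y⌉ : ℝ) / (2:ℝ)^m)) :=
        hcont_fx.integrableOn_Ioc
      have e : (∫ s in Set.Ioc (((⌈(2:ℝ)^m * y⌉ : ℝ) - 1) / (2:ℝ)^m)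
            ((⌈(2:ℝ)^m * y⌉ : ℝ) / (2:ℝ)^m), f a s)
          = ∫ s in Set.Ioc (((⌈(2:ℝ)^m * y⌉ : ℝ) - 1) / (2:ℝ)^m)
            ((⌈(2:ℝ)^m * y⌉ : ℝ) / (2:ℝ)^m), ((h a s + f x s) + (f a y - f x y)) := by
        apply integral_congr_ae
        apply Filter.Eventually.of_forall
        intro s
        simp only [hh]
        ring
      show (2:ℝ)^m * ∫ s in Set.Ioc (((⌈(2:ℝ)^m * y⌉ : ℝ) - 1) / (2:ℝ)^m)
            ((⌈(2:ℝ)^m * y⌉ : ℝ) / (2:ℝ)^m), f a s = _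
      have hint12 : IntegrableOn (fun t => h a t + f x t)
          (Set.Ioc (((⌈(2:ℝ)^m * y⌉ : ℝ) - 1) / (2:ℝ)^m) ((⌈(2:ℝ)^m * y⌉ : ℝ) / (2:ℝ)^m)) :=
        hint1.add hint2
      rw [e, avg_mul_add (dyadic_len m y) (g := fun s => h a s + f x s) hint12 _,
        avg_mul_split (g₁ := fun s => h a s) (g₂ := fun s => f x s) hint1 hint2]
      rfl
    show avg2 (j'+1) f a y - avg2 j' f a y = _
    rw [key (j'+1), key j']
    show _ = (avg2 (j'+1) h a y - avg2 j' h a y) + (avg2 (j'+1) f x y - avg2 j' f x y)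
    ring
  -- continuity of `s ↦ diff2 j' h s y`
  have cont_avg : ∀ m : ℕ, Continuous fun s => avg2 m h s y := by
    intro m
    unfold avg2
    apply continuous_const.mul
    have e : (fun s => ∫ t in Set.Ioc (((⌈(2:ℝ)^m * y⌉ : ℝ) - 1) / (2:ℝ)^m)
          ((⌈(2:ℝ)^m * y⌉ : ℝ) / (2:ℝ)^m), h s t)
        = fun s => ∫ t in Set.Icc (((⌈(2:ℝ)^m * y⌉ : ℝ) - 1) / (2:ℝ)^m)
          ((⌈(2:ℝ)^m * y⌉ : ℝ) / (2:ℝ)^m), h s t := by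
      funext s
      rw [integral_Icc_eq_integral_Ioc]
    rw [e]
    exact continuous_parametric_integral_of_continuous (f := h) (by exact hcont_h) isCompact_Icc
  have cont_diff2 : Continuous fun s => diff2 j' h s y := by
    show Continuous fun s => avg2 (j'+1) h s y - avg2 j' h s y
    exact (cont_avg (j'+1)).sub (cont_avg j')
  -- Step D : replace `f` by `h`
  have avg1_eq : ∀ m : ℕ, avg1 m (fun a b => diff2 j' f a b) x y
      = avg1 m (fun a b => diff2 j' h a b) x y + diff2 j' f x y := by
    intro m
    have hint : IntegrableOn (fun s => diff2 j' h s y)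
        (Set.Ioc (((⌈(2:ℝ)^m * x⌉ : ℝ) - 1) / (2:ℝ)^m) ((⌈(2:ℝ)^m * x⌉ : ℝ) / (2:ℝ)^m)) :=
      cont_diff2.integrableOn_Ioc
    have e : (∫ s in Set.Ioc (((⌈(2:ℝ)^m * x⌉ : ℝ) - 1) / (2:ℝ)^m)
          ((⌈(2:ℝ)^m * x⌉ : ℝ) / (2:ℝ)^m), diff2 j' f s y)
        = ∫ s in Set.Ioc (((⌈(2:ℝ)^m * x⌉ : ℝ) - 1) / (2:ℝ)^m)
          ((⌈(2:ℝ)^m * x⌉ : ℝ) / (2:ℝ)^m), (diff2 j' h s y + diff2 j' f x y) := by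
      apply integral_congr_ae
      exact Filter.Eventually.of_forall fun s => stepC s
    show (2:ℝ)^m * ∫ s in Set.Ioc (((⌈(2:ℝ)^m * x⌉ : ℝ) - 1) / (2:ℝ)^m)
          ((⌈(2:ℝ)^m * x⌉ : ℝ) / (2:ℝ)^m), diff2 j' f s y = _
    rw [e, avg_mul_add (dyadic_len m x) (g := fun s => diff2 j' h s y) hint _]
    rfl
  have stepD : diff1 j (fun a b => diff2 j' f a b) x y
      = diff1 j (fun a b => diff2 j' h a b) x y := by
    show avg1 (j+1) (fun a b => diff2 j' f a b) x y - avg1 j (fun a b => diff2 j' f a b) x y = _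
    rw [avg1_eq (j+1), avg1_eq j]
    show _ = avg1 (j+1) (fun a b => diff2 j' h a b) x y - avg1 j (fun a b => diff2 j' h a b) x y
    ring
  -- Step E : final bound
  have final : ∀ m : ℕ, j ≤ m → |avg1 m (fun a b => diff2 j' h a b) x y|
      ≤ 2 * C * (((2:ℝ)^j)⁻¹) ^ α * (((2:ℝ)^j')⁻¹) ^ α := by
    intro m hm
    unfold avg1
    apply abs_avg_le (dyadic_len m x)
    intro s hs
    have hs1 : s ∈ Set.Icc (0:ℝ) 1 := dyadic_subset m hx hs
    have hs2 : |s - x| ≤ ((2:ℝ)^m)⁻¹ := dyadic_dist m x hs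
    have hs3 : |s - x| ≤ ((2:ℝ)^j)⁻¹ := by
      refine hs2.trans (inv_anti₀ (by positivity) ?_)
      exact pow_le_pow_right₀ (by norm_num) hm
    have hb := stepB s hs1
    calc |(fun a b => diff2 j' h a b) s y| = |diff2 j' h s y| := rfl
    _ ≤ 2 * C * |s - x| ^ α * (((2:ℝ)^j')⁻¹) ^ α := hb
    _ ≤ 2 * C * (((2:ℝ)^j)⁻¹) ^ α * (((2:ℝ)^j')⁻¹) ^ α := by
        apply mul_le_mul_of_nonneg_right _ (by positivity)
        apply mul_le_mul_of_nonneg_left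
          (Real.rpow_le_rpow (abs_nonneg _) hs3 hα.le) (by positivity)
  have hsum : |diff1 j (fun a b => diff2 j' h a b) x y|
      ≤ 4 * C * (((2:ℝ)^j)⁻¹) ^ α * (((2:ℝ)^j')⁻¹) ^ α := by
    have h1 := final (j+1) (Nat.le_succ j)
    have h2 := final j le_rfl
    calc |diff1 j (fun a b => diff2 j' h a b) x y|
        ≤ |avg1 (j+1) (fun a b => diff2 j' h a b) x y|
          + |avg1 j (fun a b => diff2 j' h a b) x y| := abs_sub _ _
    _ ≤ 4 * C * (((2:ℝ)^j)⁻¹) ^ α * (((2:ℝ)^j')⁻¹) ^ α := by linarith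
  have hpow : ∀ k : ℕ, (((2:ℝ)^k)⁻¹) ^ α = (2:ℝ) ^ (-(k:ℝ) * α) := by
    intro k
    rw [← Real.rpow_natCast 2 k, ← Real.rpow_neg (by norm_num),
      ← Real.rpow_mul (by norm_num)]
  rw [stepD]
  calc |diff1 j (fun a b => diff2 j' h a b) x y|
      ≤ 4 * C * (((2:ℝ)^j)⁻¹) ^ α * (((2:ℝ)^j')⁻¹) ^ α := hsum
  _ = 4 * C * (2:ℝ) ^ (-(j:ℝ) * α) * (2:ℝ) ^ (-(j':ℝ) * α) := by
      rw [hpow j, hpow j']
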